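/- Let Q be a forcing poset with greatest lower bounds, N a set, and q ∈ Q a strongly N-generic condition. Then q is a simple strongly N-generic condition. -/
import Mathlib


/-- Two conditions are compatible if they have a common lower bound. -/
def Compat {Q : Type*} [Preorder Q] (x y : Q) : Prop := ∃ z, z ≤ x ∧ z ≤ y

/-- Compatibility within a subposet `P`. -/
def CompatIn {Q : Type*} [Preorder Q] (P : Set Q) (x y : Q) : Prop :=
  ∃ z ∈ P, z ≤ x ∧ z ≤ y

/-- `A` is a maximal antichain of the subposet `P`. -/
def IsMaxAntichainIn {Q : Type*} [Preorder Q] (P A : Set Q) : Prop :=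
  A ⊆ P ∧ (∀ a ∈ A, ∀ b ∈ A, a ≠ b → ¬ CompatIn P a b) ∧
    ∀ p ∈ P, ∃ a ∈ A, CompatIn P p a

/-- `G` is a filter on the subposet `P`. -/
def IsFilterOn {Q : Type*} [Preorder Q] (P G : Set Q) : Prop :=
  G ⊆ P ∧ G.Nonempty ∧ (∀ p ∈ G, ∀ q ∈ P, p ≤ q → q ∈ G) ∧
    ∀ p ∈ G, ∀ q ∈ G, ∃ r ∈ G, r ≤ p ∧ r ≤ q

/-- `G` is a (V-)generic filter on the subposet `P`: it meets every
maximal antichain of `P` (all of which lie in the ground model `V`). -/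
def IsGenericOn {Q : Type*} [Preorder Q] (P G : Set Q) : Prop :=
  IsFilterOn P G ∧ ∀ A : Set Q, IsMaxAntichainIn P A → (G ∩ A).Nonempty

/-- `P` is a regular suborder of `Q`: elements of `P` compatible in `Q` are
compatible in `P`, and every maximal antichain of `P` is a maximal antichain of `Q`. -/
def IsRegularSuborder {Q : Type*} [Preorder Q] (P : Set Q) : Prop :=
  (∀ p ∈ P, ∀ q ∈ P, Compat p q → CompatIn P p q) ∧
    ∀ A : Set Q, IsMaxAntichainIn P A → IsMaxAntichainIn Set.univ A

/-- `q` is a strongly `N`-generic condition: every set `D` dense in the subposet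
`N ∩ Q` (here `N` denotes the trace `N ∩ Q`, a set of conditions) is predense
in `Q` below `q`. -/
def StronglyGeneric {Q : Type*} [Preorder Q] (N : Set Q) (q : Q) : Prop :=
  ∀ D : Set Q, D ⊆ N → (∀ p ∈ N, ∃ d ∈ D, d ≤ p) →
    ∀ r, r ≤ q → ∃ d ∈ D, Compat r d

/-- in a forcing poset with greatest lower bounds (given by `meet`
on compatible pairs), every strongly `N`-generic condition `q` is a simple
strongly `N`-generic condition: there is a set `E` dense below `q` and a map
`r ↦ r↾N` on `E` with `r↾N ∈ N ∩ Q`, `r ≤ r↾N`, and every `v ≤ r↾N` in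
`N ∩ Q` compatible with `r`. -/
theorem stmt_8 {Q : Type*} [Preorder Q]
    (meet : Q → Q → Q)
    (hmeet : ∀ x y : Q, Compat x y →
      meet x y ≤ x ∧ meet x y ≤ y ∧ ∀ z, z ≤ x → z ≤ y → z ≤ meet x y)
    (N : Set Q) (q : Q) (hq : StronglyGeneric N q) :
    ∃ (E : Set Q) (f : Q → Q),
      (∀ r ∈ E, r ≤ q) ∧ (∀ r, r ≤ q → ∃ e ∈ E, e ≤ r) ∧
      ∀ r ∈ E, f r ∈ N ∧ r ≤ f r ∧ ∀ v ∈ N, v ≤ f r → Compat r v := by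
  classical
  refine ⟨{ e | e ≤ q ∧ ∃ p, p ∈ N ∧ e ≤ p ∧ ∀ v ∈ N, v ≤ p → Compat e v },
    fun e => if h : ∃ p, p ∈ N ∧ e ≤ p ∧ ∀ v ∈ N, v ≤ p → Compat e v
      then h.choose else e, fun r hr => hr.1, ?_, ?_⟩
  · -- density below q
    intro s hs
    set D : Set Q := { p | p ∈ N ∧ (¬ Compat p s ∨ ∀ v ∈ N, v ≤ p → Compat (meet p s) v) }
      with hD
    have hDsub : D ⊆ N := fun p hp => hp.1
    have hDdense : ∀ p ∈ N, ∃ d ∈ D, d ≤ p := by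
      intro p0 hp0
      by_cases hc : ∀ v ∈ N, v ≤ p0 → Compat (meet p0 s) v
      · exact ⟨p0, ⟨hp0, Or.inr hc⟩, le_refl p0⟩
      · push_neg at hc
        obtain ⟨v, hvN, hvp0, hnc⟩ := hc
        refine ⟨v, ⟨hvN, Or.inl ?_⟩, hvp0⟩
        rintro ⟨z, hz1, hz2⟩
        have hCp0s : Compat p0 s := ⟨z, le_trans hz1 hvp0, hz2⟩
        have hzm : z ≤ meet p0 s := (hmeet p0 s hCp0s).2.2 z (le_trans hz1 hvp0) hz2
        exact hnc ⟨z, hzm, hz1⟩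
    obtain ⟨d, hdD, hcomp⟩ := hq D hDsub hDdense s hs
    have hCds : Compat d s := by obtain ⟨z, hz1, hz2⟩ := hcomp; exact ⟨z, hz2, hz1⟩
    have hgood : ∀ v ∈ N, v ≤ d → Compat (meet d s) v := by
      rcases hdD.2 with h | h
      · exact absurd hCds h
      · exact h
    have hm := hmeet d s hCds
    refine ⟨meet d s, ⟨le_trans hm.2.1 hs, d, hdD.1, hm.1, hgood⟩, hm.2.1⟩
  · -- properties of f
    intro r hr
    obtain ⟨hrq, h⟩ := hr
    simp only [dif_pos h]
    obtain ⟨hpN, hrp, hcompat⟩ := h.choose_spec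
    exact ⟨hpN, hrp, fun v hv hvle => hcompat v hv hvle⟩
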